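/- Let n ≥ 4 be an integer divisible by 4 and set d = n/2. Then every Hamiltonian cycle H on the complete graph with vertex set ZMod n satisfies Σ_{e ∈ H} c_{ℓ(e)} ≥ n − 2; equivalently, Σ_{i=1}^{d} c_i · t_i ≥ n − 2, where t_i is the number of edges of H of length i. (Validity of the circlet inequality.) -/

import Mathlib

/-- The length of an edge of the complete graph on `ZMod n`:
`ℓ(i,j) = min(|i−j|, n−|i−j|)`, expressed as `min (i-j).val (j-i).val`. -/
def zLenSym {n : ℕ} : Sym2 (ZMod n) → ℕ :=
  Sym2.lift ⟨fun i j => min (i - j).val (j - i).val, fun i j => min_comm _ _⟩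

/-- The circlet cost of an edge: its length `ℓ` if `ℓ` is odd, and `d − ℓ` if `ℓ` is even. -/
def circCost {n : ℕ} (d : ℕ) (e : Sym2 (ZMod n)) : ℕ :=
  if Odd (zLenSym e) then zLenSym e else d - zLenSym e

/-- Indicator (as `Bool`) that the two endpoints of an unordered pair get the same
value under `f`. -/
def sameF {V : Type*} (f : V → Bool) : Sym2 V → Bool :=
  Sym2.lift ⟨fun a b => f a == f b, fun a b => by cases hfa : f a <;> cases hfb : f b <;> simp [hfa, hfb]⟩

@[simp] lemma sameF_mk {V : Type*} (f : V → Bool) (a b : V) :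
    sameF f s(a, b) = (f a == f b) := rfl

/-- Along any walk, the number of `f`-crossing edges has the parity of
`f u ≠ f v`. -/
lemma countP_cross_parity {V : Type*} {G : SimpleGraph V} (f : V → Bool) :
    ∀ {u v : V} (p : G.Walk u v),
      (p.edges.countP (fun e => !(sameF f e)) + (if f u = f v then 0 else 1)) % 2 = 0 := by
  intro u v p
  induction p with
  | nil => simp
  | cons h q ih =>
    rename_i a b c
    simp only [SimpleGraph.Walk.edges_cons, List.countP_cons] at *
    cases hab : f a <;> cases hbc : f b <;> cases hcd : f c <;>
      simp_all <;> omega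

/-- If every edge of a walk preserves `f`, then `f` is constant on its support. -/
lemma walk_const {V : Type*} {G : SimpleGraph V} (f : V → Bool) :
    ∀ {u v : V} (p : G.Walk u v), (∀ e ∈ p.edges, sameF f e = true) →
      ∀ x ∈ p.support, f x = f u := by
  intro u v p
  induction p with
  | nil => simp
  | cons h q ih =>
    rename_i a b c
    intro he x hx
    have hab : f a = f b := by
      have := he s(a, b) (by rw [SimpleGraph.Walk.edges_cons]; exact List.mem_cons_self)
      simpa using this
    simp only [SimpleGraph.Walk.support_cons, List.mem_cons] at hx
    rcases hx with rfl | hx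
    · rfl
    · rw [hab]
      exact ih (fun e hee => he e (by rw [SimpleGraph.Walk.edges_cons]; exact List.mem_cons_of_mem _ hee)) x hx

/-- The basic counting lemma on `Finset.range n`. -/
lemma count_lemma (n d α : ℕ) (hnd : n = 2 * d) (h1 : 1 ≤ α) (hαn : α < n) :
    ((Finset.range n).filter (fun t => ((t + α) % n < d ↔ t < d))).card
      = n - 2 * min α (n - α) := by
  have hd : 0 < d := by omega
  have hmod : ∀ t, t < n → (t + α) % n = if t + α < n then t + α else t + α - n := by
    intro t ht
    split
    · exact Nat.mod_eq_of_lt ‹_›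
    · rw [Nat.mod_eq_sub_mod (by omega), Nat.mod_eq_of_lt (by omega)]
  by_cases hα : α ≤ d
  · have heq : (Finset.range n).filter (fun t => ((t + α) % n < d ↔ t < d))
        = Finset.range (d - α) ∪ Finset.Ico d (2 * d - α) := by
      ext t
      simp only [Finset.mem_filter, Finset.mem_range, Finset.mem_union, Finset.mem_Ico]
      constructor
      · rintro ⟨ht, hc⟩
        rw [hmod t ht] at hc
        split_ifs at hc <;> omega
      · intro ht
        have ht' : t < n := by omega
        refine ⟨ht', ?_⟩
        rw [hmod t ht']
        split_ifs <;> omega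
    rw [heq, Finset.card_union_of_disjoint, Finset.card_range, Nat.card_Ico]
    · omega
    · simp only [Finset.disjoint_left, Finset.mem_range, Finset.mem_Ico]
      omega
  · have heq : (Finset.range n).filter (fun t => ((t + α) % n < d ↔ t < d))
        = Finset.Ico (2 * d - α) d ∪ Finset.Ico (3 * d - α) (2 * d) := by
      ext t
      simp only [Finset.mem_filter, Finset.mem_range, Finset.mem_union, Finset.mem_Ico]
      constructor
      · rintro ⟨ht, hc⟩
        rw [hmod t ht] at hc
        split_ifs at hc <;> omega
      · intro ht
        have ht' : t < n := by omega
        refine ⟨ht', ?_⟩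
        rw [hmod t ht']
        split_ifs <;> omega
    rw [heq, Finset.card_union_of_disjoint, Nat.card_Ico, Nat.card_Ico]
    · omega
    · simp only [Finset.disjoint_left, Finset.mem_Ico]
      omega

section Main

variable {n d : ℕ}

/-- The side indicator for the `g`-th cut, in twisted coordinates. -/
def cutSide (n d : ℕ) (g x : ZMod n) : Bool :=
  decide ((((d + 1 : ℕ) : ZMod n) * x - g).val < d)

lemma mu_sq (hnd : n = 2 * d) (hd2 : d % 2 = 0) :
    ((d + 1 : ℕ) : ZMod n) * ((d + 1 : ℕ) : ZMod n) = 1 := by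
  obtain ⟨k, hk⟩ : ∃ k, d = 2 * k := ⟨d / 2, by omega⟩
  have h1 : ((d + 1) * (d + 1) : ℕ) = (k + 1) * n + 1 := by
    rw [hnd, hk]; ring
  calc ((d + 1 : ℕ) : ZMod n) * ((d + 1 : ℕ) : ZMod n)
      = (((d + 1) * (d + 1) : ℕ) : ZMod n) := by push_cast; ring
    _ = (((k + 1) * n + 1 : ℕ) : ZMod n) := by rw [h1]
    _ = 1 := by push_cast [ZMod.natCast_self]; ring

lemma card_same_eq [NeZero n] (hn : 4 ≤ n) (hnd : n = 2 * d) (hd2 : d % 2 = 0)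
    (i j : ZMod n) (hij : i ≠ j) :
    (Finset.univ.filter (fun g : ZMod n => sameF (cutSide n d g) s(i, j) = true)).card
      = 2 * circCost d s(i, j) := by
  set μ : ZMod n := ((d + 1 : ℕ) : ZMod n) with hμdef
  have hμ : μ * μ = 1 := mu_sq hnd hd2
  have hb : i - j ≠ 0 := sub_ne_zero.mpr hij
  set a : ZMod n := μ * (i - j) with hadef
  have ha : a ≠ 0 := by
    intro h0
    apply hb
    have h2 : μ * a = 0 := by rw [h0, mul_zero]
    rwa [hadef, ← mul_assoc, hμ, one_mul] at h2
  have step1 : (Finset.univ.filter (fun g : ZMod n => sameF (cutSide n d g) s(i, j) = true)).card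
      = (Finset.univ.filter (fun y : ZMod n => ((a + y).val < d ↔ y.val < d))).card := by
    apply Finset.card_nbij' (fun g => μ * j - g) (fun y => μ * j - y)
    · intro g hg
      simp only [Finset.mem_coe, Finset.mem_filter, Finset.mem_univ, true_and, sameF_mk, cutSide,
        beq_iff_eq, decide_eq_decide, ← hμdef] at hg ⊢
      rw [show a + (μ * j - g) = μ * i - g by rw [hadef]; ring]
      exact hg
    · intro y hy
      simp only [Finset.mem_coe, Finset.mem_filter, Finset.mem_univ, true_and, sameF_mk, cutSide,
        beq_iff_eq, decide_eq_decide, ← hμdef] at hy ⊢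
      rw [show μ * i - (μ * j - y) = a + y by rw [hadef]; ring,
        show μ * j - (μ * j - y) = y by ring]
      exact hy
    · intro g _; ring
    · intro y _; ring
  have step2 : (Finset.univ.filter (fun y : ZMod n => ((a + y).val < d ↔ y.val < d))).card
      = ((Finset.range n).filter (fun t => ((t + a.val) % n < d ↔ t < d))).card := by
    refine Finset.card_nbij' (fun y : ZMod n => y.val) (fun t : ℕ => (t : ZMod n)) ?_ ?_ ?_ ?_
    · intro y hy
      simp only [Finset.mem_coe, Finset.mem_filter, Finset.mem_univ, true_and, Finset.mem_range] at hy ⊢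
      refine ⟨ZMod.val_lt y, ?_⟩
      rwa [ZMod.val_add, Nat.add_comm] at hy
    · intro t ht
      simp only [Finset.mem_coe, Finset.mem_filter, Finset.mem_range, Finset.mem_univ, true_and] at ht ⊢
      rw [ZMod.val_add, ZMod.val_cast_of_lt ht.1, Nat.add_comm]
      exact ht.2
    · intro y _
      simp [ZMod.natCast_val, ZMod.cast_id]
    · intro t ht
      simp only [Finset.mem_coe, Finset.mem_filter, Finset.mem_range] at ht
      exact ZMod.val_cast_of_lt ht.1
  have hane : a.val ≠ 0 := fun h0 => ha ((ZMod.val_eq_zero a).mp h0)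
  have haltn : a.val < n := ZMod.val_lt a
  have hval : min a.val (n - a.val) = d - circCost d s(i, j) ∧ circCost d s(i, j) ≤ d := by
    have hβne : (i - j).val ≠ 0 := fun h0 => hb ((ZMod.val_eq_zero _).mp h0)
    set β := (i - j).val with hβdef
    have hβn : β < n := ZMod.val_lt _
    have hji : (j - i).val = n - β := by
      haveI : NeZero (i - j) := ⟨hb⟩
      rw [show j - i = -(i - j) by ring, ZMod.val_neg_of_ne_zero]
    have hℓ : zLenSym s(i, j) = min β (n - β) := by
      show min (i - j).val (j - i).val = _
      rw [hji]
    have hα : a.val = ((d + 1) * β) % n := by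
      rw [hadef, ZMod.val_mul, hμdef, ZMod.val_natCast, Nat.mod_eq_of_lt (show d + 1 < n by omega)]
    rw [circCost, hℓ]
    rcases Nat.even_or_odd β with ⟨m, hm⟩ | ⟨m, hm⟩
    · have hα2 : a.val = β := by
        rw [hα, show (d + 1) * β = β + m * n by rw [hnd, hm]; ring,
          Nat.add_mul_mod_self_right, Nat.mod_eq_of_lt hβn]
      have hodd : ¬ Odd (min β (n - β)) := by rw [Nat.odd_iff]; omega
      rw [if_neg hodd]
      omega
    · have hα2 : a.val = (β + d) % n := by
        rw [hα, show (d + 1) * β = (β + d) + m * n by rw [hnd, hm]; ring,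
          Nat.add_mul_mod_self_right]
      have hodd : Odd (min β (n - β)) := by rw [Nat.odd_iff]; omega
      rw [if_pos hodd]
      have hβd : β ≠ d := by omega
      rcases lt_or_gt_of_ne hβd with hlt | hgt
      · rw [Nat.mod_eq_of_lt (by omega)] at hα2; omega
      · rw [Nat.mod_eq_sub_mod (by omega), Nat.mod_eq_of_lt (by omega)] at hα2; omega
  rw [step1, step2, count_lemma n d a.val hnd (by omega) haltn]
  set c := circCost d s(i, j)
  rw [hval.1]
  have := hval.2
  omega

lemma cutSide_shift [NeZero n] (hd : 0 < d) (hnd : n = 2 * d) (c : ZMod n)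
    (hkey : ∀ y : ZMod n, (y.val < d ↔ (y + c).val < d)) : c = 0 := by
  by_contra hc
  haveI : NeZero c := ⟨hc⟩
  have h1 : c.val < d := by
    have h0 := (hkey 0).mp (by simp [hd])
    simpa using h0
  have h2 : (-c).val < d := (hkey (-c)).mpr (by simp [hd])
  rw [ZMod.val_neg_of_ne_zero] at h2
  have hcv : c.val ≠ 0 := fun h0 => hc ((ZMod.val_eq_zero c).mp h0)
  have := ZMod.val_lt c
  omega

lemma cut_collision [NeZero n] (hn : 4 ≤ n) (hnd : n = 2 * d) (hd2 : d % 2 = 0) (g h : ZMod n)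
    (hQ : (∀ x, cutSide n d g x = cutSide n d h x) ∨
          (∀ x, cutSide n d g x = !(cutSide n d h x))) :
    h = g ∨ h = g + (d : ZMod n) := by
  have hd : 0 < d := by omega
  set μ : ZMod n := ((d + 1 : ℕ) : ZMod n) with hμdef
  have hμ : μ * μ = 1 := mu_sq hnd hd2
  have keyg : ∀ y : ZMod n, μ * (μ * (y + g)) - g = y := by
    intro y; rw [← mul_assoc, hμ, one_mul]; ring
  have keyh : ∀ y : ZMod n, μ * (μ * (y + g)) - h = y + (g - h) := by
    intro y; rw [← mul_assoc, hμ, one_mul]; ring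
  rcases hQ with hQ | hQ
  · left
    have hiff : ∀ y : ZMod n, (y.val < d ↔ (y + (g - h)).val < d) := by
      intro y
      have h0 := hQ (μ * (y + g))
      simp only [cutSide, ← hμdef, decide_eq_decide] at h0
      rw [keyg y, keyh y] at h0
      exact h0
    have h0 : g - h = 0 := cutSide_shift hd hnd _ hiff
    exact (sub_eq_zero.mp h0).symm
  · right
    have hiff : ∀ y : ZMod n, (y.val < d ↔ ¬ ((y + (g - h)).val < d)) := by
      intro y
      have h0 := hQ (μ * (y + g))
      simp only [cutSide, ← hμdef, ← decide_not, decide_eq_decide] at h0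
      rw [keyg y, keyh y] at h0
      exact h0
    have h1 : ¬ ((g - h).val < d) := by
      have h0 := (hiff 0).mp (by simp [hd])
      simpa using h0
    have hgh0 : g - h ≠ 0 := by
      intro h0
      rw [h0] at h1
      simp at h1
      omega
    haveI : NeZero (g - h) := ⟨hgh0⟩
    have h2 : ¬ ((-(g - h)).val < d) := by
      intro hlt
      have h0 := (hiff (-(g - h))).mp hlt
      simp [hd] at h0
    rw [ZMod.val_neg_of_ne_zero] at h2
    have hvlt := ZMod.val_lt (g - h)
    have hval : (g - h).val = d := by omega
    have hghd : g - h = (d : ZMod n) := by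
      conv_lhs => rw [show (g - h : ZMod n) = ((g - h).val : ZMod n)
        by rw [ZMod.natCast_val, ZMod.cast_id]]
      rw [hval]
    have hdd : (d : ZMod n) + (d : ZMod n) = 0 := by
      calc (d : ZMod n) + (d : ZMod n) = ((2 * d : ℕ) : ZMod n) := by push_cast; ring
        _ = 0 := by rw [← hnd]; exact ZMod.natCast_self n
    have hnegd : -(d : ZMod n) = (d : ZMod n) := neg_eq_of_add_eq_zero_left hdd
    calc h = g - (g - h) := by ring
      _ = g - (d : ZMod n) := by rw [hghd]
      _ = g + (d : ZMod n) := by rw [sub_eq_add_neg, hnegd]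

end Main

set_option maxHeartbeats 800000 in
/-- Validity of the circlet inequality: for `n ≥ 4` divisible by 4 and `d = n/2`,
every Hamiltonian cycle on the complete graph on `ZMod n` has circlet cost at least `n − 2`. -/
theorem circlet_inequality_valid (n : ℕ) (hn : 4 ≤ n) (h4 : 4 ∣ n)
    (v : ZMod n) (w : (⊤ : SimpleGraph (ZMod n)).Walk v v)
    (hw : w.IsHamiltonianCycle) :
    n - 2 ≤ ∑ e ∈ w.edges.toFinset, circCost (n / 2) e := by
  haveI : NeZero n := ⟨by omega⟩
  obtain ⟨d, hnd⟩ : ∃ d, n = 2 * d := ⟨n / 2, by omega⟩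
  have hd2 : d % 2 = 0 := by omega
  have hdn : n / 2 = d := by omega
  rw [hdn]
  classical
  have hnodup : w.edges.Nodup := hw.isCycle.isCircuit.isTrail.edges_nodup
  set E := w.edges.toFinset with hE
  set t : ZMod n → ℕ := fun g => (E.filter (fun e => sameF (cutSide n d g) e = true)).card
    with ht
  have hlen : w.edges.length = n := by rw [w.length_edges, hw.length_eq, ZMod.card]
  have heven : ∀ g, t g % 2 = 0 := by
    intro g
    have h1 : t g = w.edges.countP (fun e => sameF (cutSide n d g) e) := by
      rw [ht]
      simp only [hE, ← List.toFinset_filter, List.card_toFinset,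
        List.dedup_eq_self.mpr (hnodup.filter _), ← List.countP_eq_length_filter]
    have h2 := countP_cross_parity (cutSide n d g) w
    rw [if_pos rfl, Nat.add_zero] at h2
    have h3 : w.edges.length = w.edges.countP (fun e => sameF (cutSide n d g) e)
        + w.edges.countP (fun e => !(sameF (cutSide n d g) e)) :=
      by
        rw [List.length_eq_countP_add_countP (fun e => sameF (cutSide n d g) e) (l := w.edges)]
        congr 1
        apply List.countP_congr
        intro e _
        simp
    omega
  have hswap : ∑ g : ZMod n, t g
      = ∑ e ∈ E, (Finset.univ.filter
          (fun g : ZMod n => sameF (cutSide n d g) e = true)).card := by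
    simp only [ht, Finset.card_filter]
    exact Finset.sum_comm
  have hrep : ∀ e ∈ E, (Finset.univ.filter
      (fun g : ZMod n => sameF (cutSide n d g) e = true)).card = 2 * circCost d e := by
    intro e he
    have hadj : e ∈ (⊤ : SimpleGraph (ZMod n)).edgeSet :=
      w.edges_subset_edgeSet (List.mem_toFinset.mp he)
    revert hadj
    induction e using Sym2.ind with
    | _ i j =>
      intro hadj
      have hij : i ≠ j := by simpa using hadj
      exact card_same_eq hn hnd hd2 i j hij
  have hsum2 : ∑ g : ZMod n, t g = 2 * ∑ e ∈ E, circCost d e := by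
    rw [hswap, Finset.sum_congr rfl hrep, ← Finset.mul_sum]
  set Z := Finset.univ.filter (fun g : ZMod n => t g = 0) with hZ
  have hZcard : Z.card ≤ 2 := by
    by_cases hZe : Z = ∅
    · simp [hZe]
    obtain ⟨g₀, hg₀⟩ := Finset.nonempty_iff_ne_empty.mpr hZe
    have hg₀' : t g₀ = 0 := by
      simp only [hZ, Finset.mem_filter] at hg₀; exact hg₀.2
    have hcross : ∀ gg, t gg = 0 → ∀ e ∈ w.edges, sameF (cutSide n d gg) e = false := by
      intro gg hgg e he
      have heE : e ∈ E := List.mem_toFinset.mpr he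
      rw [ht] at hgg
      have h5 := Finset.filter_eq_empty_iff.mp (Finset.card_eq_zero.mp hgg) heE
      simpa using h5
    have hsub : Z ⊆ {g₀, g₀ + (d : ZMod n)} := by
      intro h hh
      have hh' : t h = 0 := by
        simp only [hZ, Finset.mem_filter] at hh; exact hh.2
      have hQ : ∀ e ∈ w.edges,
          sameF (fun x => cutSide n d g₀ x == cutSide n d h x) e = true := by
        intro e he
        have h1 := hcross g₀ hg₀' e he
        have h2 := hcross h hh' e he
        revert h1 h2
        induction e using Sym2.ind with
        | _ x y =>
          intro h1 h2
          simp only [sameF_mk] at *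
          cases hxa : cutSide n d g₀ x <;> cases hxb : cutSide n d h x <;>
            cases hya : cutSide n d g₀ y <;> cases hyb : cutSide n d h y <;> simp [hxa, hxb, hya, hyb] at h1 h2 ⊢
      have hconst := walk_const _ w hQ
      have hall : ∀ x : ZMod n, (cutSide n d g₀ x == cutSide n d h x)
          = (cutSide n d g₀ v == cutSide n d h v) :=
        fun x => hconst x (hw.mem_support x)
      have hcol : h = g₀ ∨ h = g₀ + (d : ZMod n) := by
        rcases hb : (cutSide n d g₀ v == cutSide n d h v) with _ | _
        · refine cut_collision hn hnd hd2 g₀ h (Or.inr ?_)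
          intro x
          have hx := hall x
          rw [hb] at hx
          cases hxa : cutSide n d g₀ x <;> cases hxb : cutSide n d h x <;> simp_all
        · refine cut_collision hn hnd hd2 g₀ h (Or.inl ?_)
          intro x
          have hx := hall x
          rw [hb] at hx
          cases hxa : cutSide n d g₀ x <;> cases hxb : cutSide n d h x <;> simp [hxa, hxb] at hx ⊢
      simp only [Finset.mem_insert, Finset.mem_singleton]
      tauto
    calc Z.card ≤ ({g₀, g₀ + (d : ZMod n)} : Finset (ZMod n)).card :=
          Finset.card_le_card hsub
      _ ≤ 2 := le_trans (Finset.card_insert_le _ _) (by simp)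
  have hge : ∀ g ∈ Finset.univ \ Z, 2 ≤ t g := by
    intro g hg
    simp only [hZ, Finset.mem_sdiff, Finset.mem_univ, true_and, Finset.mem_filter] at hg
    have := heven g
    omega
  have hcard : (Finset.univ \ Z).card = n - Z.card := by
    rw [Finset.card_sdiff_of_subset (Finset.subset_univ _), Finset.card_univ, ZMod.card]
  have hsum3 : 2 * (n - 2) ≤ ∑ g ∈ Finset.univ \ Z, t g := by
    have h6 := Finset.card_nsmul_le_sum (Finset.univ \ Z) t 2 hge
    simp only [smul_eq_mul] at h6
    calc 2 * (n - 2) ≤ (Finset.univ \ Z).card * 2 := by omega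
      _ ≤ _ := h6
  have hsum4 : ∑ g ∈ Finset.univ \ Z, t g ≤ ∑ g : ZMod n, t g :=
    Finset.sum_le_sum_of_subset Finset.sdiff_subset
  omega
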